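/- Let n ≥ 1 and h = (h_1,…,h_n) ∈ ℝⁿ with h_j > 0 for each j. For ξ ∈ ℤⁿ define u_ξ(x) = exp(Σ_{j=1}^n x_j·ln h_j)·e^{2πi x·ξ} and v_ξ(x) = exp(−Σ_{j=1}^n x_j·ln h_j)·e^{2πi x·ξ} for x ∈ ℝⁿ. Then: (i) Σ_{j=1}^n ∂²u_ξ/∂x_j²(x) = λ_ξ·u_ξ(x) for all x ∈ ℝⁿ, where λ_ξ = Σ_{j=1}^n (ln h_j + 2πi ξ_j)²; (ii) for every j and every x with x_j = 0, writing x′ for the point obtained from x by replacing x_j by 1, one has h_j·u_ξ(x) = u_ξ(x′) and h_j·(∂u_ξ/∂x_j)(x) = (∂u_ξ/∂x_j)(x′); (iii) ∫_{(0,1)^n} u_ξ(x)·conj(v_η(x)) dx = 1 if ξ = η and 0 if ξ ≠ η, for all ξ, η ∈ ℤⁿ. -/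

import Mathlib

open Complex MeasureTheory Set

noncomputable section

/-- `u_ξ(x) = h^x e^{2π i x·ξ}` on `ℝⁿ`, where `h^x = exp(Σ x_j log h_j)`. -/
def uN {n : ℕ} (h : Fin n → ℝ) (ξ : Fin n → ℤ) (x : Fin n → ℝ) : ℂ :=
  Complex.exp (∑ j, (x j : ℂ) * (Real.log (h j) : ℂ)) *
    Complex.exp (2 * Real.pi * Complex.I * ∑ j, (x j : ℂ) * (ξ j : ℂ))

/-- `v_ξ(x) = h^{-x} e^{2π i x·ξ}` on `ℝⁿ`. -/
def vN {n : ℕ} (h : Fin n → ℝ) (ξ : Fin n → ℤ) (x : Fin n → ℝ) : ℂ :=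
  Complex.exp (-∑ j, (x j : ℂ) * (Real.log (h j) : ℂ)) *
    Complex.exp (2 * Real.pi * Complex.I * ∑ j, (x j : ℂ) * (ξ j : ℂ))

namespace Stmt5Aux

variable {n : ℕ}

/-- The exponent coefficients. -/
def cc (h : Fin n → ℝ) (ξ : Fin n → ℤ) (j : Fin n) : ℂ :=
  (Real.log (h j) : ℂ) + 2 * Real.pi * Complex.I * (ξ j : ℂ)

lemma uN_eq (h : Fin n → ℝ) (ξ : Fin n → ℤ) (x : Fin n → ℝ) :
    uN h ξ x = Complex.exp (∑ j, (x j : ℂ) * cc h ξ j) := by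
  rw [uN, ← Complex.exp_add, Finset.mul_sum, ← Finset.sum_add_distrib]
  congr 1
  refine Finset.sum_congr rfl fun j _ => ?_
  rw [cc]; ring

lemma update_eq (h : Fin n → ℝ) (ξ : Fin n → ℤ) (x : Fin n → ℝ) (j : Fin n) (t : ℝ) :
    uN h ξ (Function.update x j t) =
      Complex.exp ((∑ i ∈ Finset.univ.erase j, (x i : ℂ) * cc h ξ i) + t * cc h ξ j) := by
  rw [uN_eq]
  congr 1
  rw [← Finset.add_sum_erase _ _ (Finset.mem_univ j), Function.update_self, add_comm]
  congr 1
  refine Finset.sum_congr rfl fun i hi => ?_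
  rw [Function.update_of_ne (Finset.ne_of_mem_erase hi)]

lemma hasDerivAt_exp_line (A c : ℂ) (t : ℝ) :
    HasDerivAt (fun s : ℝ => Complex.exp (A + s * c)) (c * Complex.exp (A + t * c)) t := by
  have h1 : HasDerivAt (fun w : ℂ => A + w * c) c (t : ℂ) := by
    simpa using ((hasDerivAt_id (t : ℂ)).mul_const c).const_add A
  have := h1.cexp
  rw [mul_comm] at this
  exact this.comp_ofReal

lemma deriv_uN (h : Fin n → ℝ) (ξ : Fin n → ℤ) (x : Fin n → ℝ) (j : Fin n) :
    deriv (fun t : ℝ => uN h ξ (Function.update x j t)) =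
      fun t => cc h ξ j * uN h ξ (Function.update x j t) := by
  funext t
  simp only [update_eq]
  exact (hasDerivAt_exp_line _ _ t).deriv

lemma iter2 (h : Fin n → ℝ) (ξ : Fin n → ℤ) (x : Fin n → ℝ) (j : Fin n) :
    iteratedDeriv 2 (fun t : ℝ => uN h ξ (Function.update x j t)) (x j) =
      (cc h ξ j) ^ 2 * uN h ξ x := by
  rw [iteratedDeriv_succ, iteratedDeriv_one, deriv_uN]
  simp only [update_eq]
  have := ((hasDerivAt_exp_line (∑ i ∈ Finset.univ.erase j, (x i : ℂ) * cc h ξ i)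
      (cc h ξ j) (x j)).const_mul (cc h ξ j)).deriv
  rw [this, ← update_eq, Function.update_eq_self]
  ring

lemma oneD (m : ℤ) : (∫ t in Set.Ioo (0:ℝ) 1,
    Complex.exp ((2*(Real.pi:ℂ)*Complex.I*(m:ℂ)) * (t:ℂ))) = if m = 0 then 1 else 0 := by
  by_cases hm : m = 0
  · simp [hm]
  · rw [if_neg hm, ← integral_Ioc_eq_integral_Ioo,
      ← intervalIntegral.integral_of_le (zero_le_one (α := ℝ))]
    have hc : (2*(Real.pi:ℂ)*Complex.I*(m:ℂ)) ≠ 0 := by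
      simp [Real.pi_ne_zero, Complex.I_ne_zero, hm]
    rw [integral_exp_mul_complex hc, Complex.ofReal_one, Complex.ofReal_zero, mul_one, mul_zero,
      Complex.exp_zero]
    have h2 : (2*(Real.pi:ℂ)*Complex.I*(m:ℂ)) = (m:ℂ)*(2*(Real.pi:ℂ)*Complex.I) := by ring
    rw [h2, Complex.exp_int_mul_two_pi_mul_I, sub_self, zero_div]

lemma integrand_eq (h : Fin n → ℝ) (ξ η : Fin n → ℤ) (x : Fin n → ℝ) :
    uN h ξ x * (starRingEnd ℂ) (vN h η x) =
    ∏ j, Complex.exp ((2*(Real.pi:ℂ)*Complex.I*(((ξ j - η j : ℤ)):ℂ)) * (x j : ℂ)) := by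
  rw [uN, vN, map_mul, ← Complex.exp_conj, ← Complex.exp_conj]
  simp only [map_neg, map_sum, map_mul, Complex.conj_ofReal, Complex.conj_I, map_intCast,
    map_ofNat]
  rw [← Complex.exp_add, ← Complex.exp_add, ← Complex.exp_add, ← Complex.exp_sum]
  congr 1
  have key : ∀ j, (2*(Real.pi:ℂ)*Complex.I*(((ξ j - η j : ℤ)):ℂ)) * (x j : ℂ)
      = 2*(Real.pi:ℂ)*Complex.I*((x j:ℂ)*(ξ j:ℂ)) - 2*(Real.pi:ℂ)*Complex.I*((x j:ℂ)*(η j:ℂ)) := by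
    intro j; push_cast; ring
  rw [Finset.sum_congr rfl fun j _ => key j, Finset.sum_sub_distrib,
    ← Finset.mul_sum, ← Finset.mul_sum]
  ring

end Stmt5Aux

open Stmt5Aux

theorem stmt_5 (n : ℕ) (hn : 1 ≤ n) (h : Fin n → ℝ) (hh : ∀ j, 0 < h j) :
    (∀ (ξ : Fin n → ℤ) (x : Fin n → ℝ),
      (∑ j, iteratedDeriv 2 (fun t : ℝ => uN h ξ (Function.update x j t)) (x j)) =
        (∑ j, ((Real.log (h j) : ℂ) + 2 * Real.pi * Complex.I * (ξ j : ℂ)) ^ 2) *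
          uN h ξ x) ∧
    (∀ (ξ : Fin n → ℤ) (j : Fin n) (x : Fin n → ℝ), x j = 0 →
      ((h j : ℂ) * uN h ξ x = uN h ξ (Function.update x j 1)) ∧
      ((h j : ℂ) * deriv (fun t : ℝ => uN h ξ (Function.update x j t)) (x j) =
        deriv (fun t : ℝ => uN h ξ (Function.update x j t)) 1)) ∧
    (∀ ξ η : Fin n → ℤ,
      (∫ x in Set.univ.pi fun _ : Fin n => Set.Ioo (0:ℝ) 1,
        uN h ξ x * (starRingEnd ℂ) (vN h η x)) = if ξ = η then 1 else 0) := by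
  refine ⟨?_, ?_, ?_⟩
  · intro ξ x
    simp only [iter2]
    rw [← Finset.sum_mul]
    rfl
  · intro ξ j x hx
    have hexpc : Complex.exp (cc h ξ j) = (h j : ℂ) := by
      rw [cc, Complex.exp_add, mul_comm (2 * (Real.pi:ℂ) * Complex.I) ((ξ j : ℂ)),
        Complex.exp_int_mul_two_pi_mul_I, mul_one, ← Complex.ofReal_exp, Real.exp_log (hh j)]
    have h0 : uN h ξ x =
        Complex.exp (∑ i ∈ Finset.univ.erase j, (x i : ℂ) * cc h ξ i) := by
      conv_lhs => rw [← Function.update_eq_self j x]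
      rw [update_eq, hx, Complex.ofReal_zero, zero_mul, add_zero]
    have hg1 : (h j : ℂ) * uN h ξ x = uN h ξ (Function.update x j 1) := by
      rw [h0, update_eq, Complex.ofReal_one, one_mul, Complex.exp_add, hexpc]
      ring
    refine ⟨hg1, ?_⟩
    simp only [deriv_uN]
    rw [Function.update_eq_self, ← hg1]
    ring
  · intro ξ η
    have hmeas : MeasurableSet (Set.univ.pi fun _ : Fin n => Set.Ioo (0:ℝ) 1) :=
      MeasurableSet.univ_pi fun _ => measurableSet_Ioo
    have step1 : (∫ x in Set.univ.pi fun _ : Fin n => Set.Ioo (0:ℝ) 1,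
        uN h ξ x * (starRingEnd ℂ) (vN h η x)) =
        ∫ x : Fin n → ℝ, ∏ j, (Set.Ioo (0:ℝ) 1).indicator
          (fun t : ℝ => Complex.exp ((2*(Real.pi:ℂ)*Complex.I*(((ξ j - η j : ℤ)):ℂ)) * (t : ℂ)))
          (x j) := by
      rw [← integral_indicator hmeas]
      congr 1
      funext x
      by_cases hx : x ∈ Set.univ.pi fun _ : Fin n => Set.Ioo (0:ℝ) 1
      · rw [Set.indicator_of_mem hx, integrand_eq]
        refine Finset.prod_congr rfl fun j _ => ?_
        rw [Set.indicator_of_mem (hx j (Set.mem_univ j))]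
      · rw [Set.indicator_of_notMem hx]
        rw [Set.mem_pi] at hx
        push_neg at hx
        obtain ⟨j, _, hj⟩ := hx
        exact (Finset.prod_eq_zero (Finset.mem_univ j) (Set.indicator_of_notMem hj _)).symm
    rw [step1, MeasureTheory.integral_fintype_prod_volume_eq_prod
      (f := fun j => (Set.Ioo (0:ℝ) 1).indicator
        (fun t : ℝ => Complex.exp ((2*(Real.pi:ℂ)*Complex.I*(((ξ j - η j : ℤ)):ℂ)) * (t : ℂ))))]
    have step2 : ∀ j : Fin n, (∫ t : ℝ, (Set.Ioo (0:ℝ) 1).indicator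
        (fun t : ℝ => Complex.exp ((2*(Real.pi:ℂ)*Complex.I*(((ξ j - η j : ℤ)):ℂ)) * (t : ℂ)))
        t) = if ξ j = η j then 1 else 0 := by
      intro j
      rw [integral_indicator measurableSet_Ioo, oneD]
      simp only [sub_eq_zero]
    rw [Finset.prod_congr rfl fun j _ => step2 j]
    by_cases hξη : ξ = η
    · simp [hξη]
    · rw [if_neg hξη]
      obtain ⟨j, hj⟩ : ∃ j, ξ j ≠ η j := by
        by_contra hc
        push_neg at hc
        exact hξη (funext hc)
      exact Finset.prod_eq_zero (Finset.mem_univ j) (if_neg hj)
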